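/- Define J₂(y) = α·sqrt(x_A² + y²) − sqrt((y − y_T)² + x_T²) for fixed x_A > 0, x_T ≠ 0, y_T ∈ ℝ, and α ∈ (0,1). Then any critical point y of J₂ satisfies the quartic (1−α²)y⁴ − 2(1−α²)y_T y³ + [(1−α²)y_T² + x_A² − α²x_T²]y² − 2x_A²y_T y + x_A²y_T² = 0. -/
import Mathlib


/-- any critical point of J₂(y) = α·sqrt(x_A²+y²) − sqrt((y−y_T)²+x_T²)
satisfies the ATDDG aimpoint quartic. -/
theorem stmt13 (α xA xT yT : ℝ) (hα : α ∈ Set.Ioo (0:ℝ) 1) (hxA : 0 < xA) (hxT : xT ≠ 0)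
    (J : ℝ → ℝ)
    (hJ : ∀ y, J y = α * Real.sqrt (xA^2 + y^2) - Real.sqrt ((y - yT)^2 + xT^2))
    (y : ℝ) (hcrit : HasDerivAt J 0 y) :
    (1-α^2)*y^4 - 2*(1-α^2)*yT*y^3 + ((1-α^2)*yT^2 + xA^2 - α^2*xT^2)*y^2
      - 2*xA^2*yT*y + xA^2*yT^2 = 0 := by
  set A := xA^2 + y^2 with hAdef
  set B := (y - yT)^2 + xT^2 with hBdef
  have hApos : 0 < A := by positivity
  have hBpos : 0 < B := by positivity
  have hsA : 0 < Real.sqrt A := Real.sqrt_pos.mpr hApos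
  have hsB : 0 < Real.sqrt B := Real.sqrt_pos.mpr hBpos
  have h1 : HasDerivAt (fun z : ℝ => xA^2 + z^2) (2*y) y := by
    have := (hasDerivAt_pow 2 y).const_add (xA^2)
    simpa using this
  have h2 : HasDerivAt (fun z : ℝ => (z - yT)^2 + xT^2) (2*(y - yT)) y := by
    have hz : HasDerivAt (fun z : ℝ => z - yT) 1 y := (hasDerivAt_id y).sub_const yT
    have := (hz.pow 2).add_const (xT^2)
    simpa using this
  have hs1 : HasDerivAt (fun z : ℝ => Real.sqrt (xA^2 + z^2))
      ((2*y) / (2 * Real.sqrt A)) y := h1.sqrt (ne_of_gt hApos)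
  have hs2 : HasDerivAt (fun z : ℝ => Real.sqrt ((z - yT)^2 + xT^2))
      ((2*(y - yT)) / (2 * Real.sqrt B)) y := h2.sqrt (ne_of_gt hBpos)
  have hJd : HasDerivAt J (α * ((2*y) / (2 * Real.sqrt A))
      - (2*(y - yT)) / (2 * Real.sqrt B)) y := by
    have := (hs1.const_mul α).sub hs2
    exact this.congr_of_eventuallyEq (by filter_upwards with z using hJ z)
  have heq : α * ((2*y) / (2 * Real.sqrt A)) - (2*(y - yT)) / (2 * Real.sqrt B) = 0 :=
    hJd.unique hcrit
  have hmain : α * y * Real.sqrt B = (y - yT) * Real.sqrt A := by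
    field_simp at heq
    linarith [heq]
  have hsq : α^2 * y^2 * B = (y - yT)^2 * A := by
    have := congrArg (fun t => t^2) hmain
    simp only [mul_pow] at this
    rw [Real.sq_sqrt hApos.le, Real.sq_sqrt hBpos.le] at this
    linarith [this]
  rw [hAdef, hBdef] at hsq
  nlinarith [hsq]
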